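/- Let M = UV be a slack matrix of a pointed full-dimensional polyhedral cone K ⊆ R^d, where U ∈ R^{n×d} and V ∈ R^{d×m}. Then K is linearly isomorphic to the cone generated by the rows of U, and the Euclidean dual of that cone equals the cone generated by the columns of V. -/

import Mathlib

open Matrix Pointwise

/-- The Euclidean dual cone of `K ⊆ ℝ^d`. -/
def eucDual {d : ℕ} (K : Set (Fin d → ℝ)) : Set (Fin d → ℝ) :=
  {y | ∀ x ∈ K, 0 ≤ x ⬝ᵥ y}

/-- A polyhedral cone: nonnegative combinations of finitely many vectors. -/
def IsPolyhedralCone {d : ℕ} (K : Set (Fin d → ℝ)) : Prop :=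
  ∃ (n : ℕ) (v : Fin n → (Fin d → ℝ)),
    K = {x | ∃ c : Fin n → ℝ, (∀ i, 0 ≤ c i) ∧ x = ∑ i, c i • v i}

/-- The convex cone generated by the vectors `v 0, …, v (n-1)`. -/
def coneGenBy {n : ℕ} {V : Type*} [AddCommMonoid V] [Module ℝ V] (v : Fin n → V) : Set V :=
  {x | ∃ c : Fin n → ℝ, (∀ i, 0 ≤ c i) ∧ x = ∑ i, c i • v i}

/-- `r` generates an extreme ray of the cone `K`. -/
def IsExtremeRayGen {d : ℕ} (K : Set (Fin d → ℝ)) (r : Fin d → ℝ) : Prop :=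
  r ≠ 0 ∧ r ∈ K ∧
    ∀ x ∈ K, ∀ y ∈ K, (∃ c : ℝ, 0 ≤ c ∧ x + y = c • r) →
      (∃ a : ℝ, 0 ≤ a ∧ x = a • r) ∧ (∃ b : ℝ, 0 ≤ b ∧ y = b • r)

/-- The family `v` consists of generators of the distinct extreme rays of `K`,
one generator per extreme ray, covering all extreme rays of `K`. -/
def GensDistinctExtremeRays {d n : ℕ} (K : Set (Fin d → ℝ))
    (v : Fin n → (Fin d → ℝ)) : Prop :=
  (∀ i, IsExtremeRayGen K (v i)) ∧
  (∀ i j, i ≠ j → ∀ c : ℝ, v i ≠ c • v j) ∧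
  (∀ r, IsExtremeRayGen K r → ∃ i, ∃ c : ℝ, 0 < c ∧ r = c • v i)

/-- `M` is a slack matrix of the cone `K`: `M i j = ⟨x i, y j⟩` where the `x i`
generate the distinct extreme rays of `K` and the `y j` generate the distinct
extreme rays of the (Euclidean) dual cone of `K`. -/
def IsSlackMatrix {d n m : ℕ} (M : Matrix (Fin n) (Fin m) ℝ)
    (K : Set (Fin d → ℝ)) : Prop :=
  ∃ (x : Fin n → (Fin d → ℝ)) (y : Fin m → (Fin d → ℝ)),
    GensDistinctExtremeRays K x ∧ GensDistinctExtremeRays (eucDual K) y ∧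
    ∀ i j, M i j = x i ⬝ᵥ y j

set_option linter.unusedSectionVars false
set_option maxHeartbeats 1000000

namespace SlackAux
variable {E : Type*} [AddCommGroup E] [Module ℝ E]


/-- cone generated by a finite family -/
def cg {ι : Type*} [Fintype ι] (v : ι → E) : Set E :=
  {x | ∃ c : ι → ℝ, (∀ i, 0 ≤ c i) ∧ x = ∑ i, c i • v i}

variable {ι : Type*} [Fintype ι] {v : ι → E}

theorem zero_mem_cg : (0 : E) ∈ cg v :=
  ⟨0, fun _ => le_rfl, by simp⟩

theorem gen_mem_cg [DecidableEq ι] (i : ι) : v i ∈ cg v := by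
  refine ⟨fun j => if j = i then 1 else 0, fun j => by positivity, ?_⟩
  simp [ite_smul]

theorem add_mem_cg {a b : E} (ha : a ∈ cg v) (hb : b ∈ cg v) : a + b ∈ cg v := by
  obtain ⟨c, hc, rfl⟩ := ha; obtain ⟨c', hc', rfl⟩ := hb
  exact ⟨c + c', fun i => add_nonneg (hc i) (hc' i), by
    simp [add_smul, Finset.sum_add_distrib]⟩

theorem smul_mem_cg {a : E} {t : ℝ} (ht : 0 ≤ t) (ha : a ∈ cg v) : t • a ∈ cg v := by
  obtain ⟨c, hc, rfl⟩ := ha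
  exact ⟨fun i => t * c i, fun i => mul_nonneg ht (hc i), by
    rw [Finset.smul_sum]; exact Finset.sum_congr rfl fun i _ => (smul_smul t (c i) (v i))⟩

theorem sum_mem_of {D : Set E} (h0 : (0:E) ∈ D) (hadd : ∀ a ∈ D, ∀ b ∈ D, a + b ∈ D)
    {κ : Type*} (s : Finset κ) (f : κ → E) (hf : ∀ j ∈ s, f j ∈ D) :
    ∑ j ∈ s, f j ∈ D := by
  classical
  induction s using Finset.induction_on with
  | empty => simpa
  | @insert a s' hj ih =>
    rw [Finset.sum_insert hj]
    exact hadd _ (hf a (by simp)) _ (ih fun j hjs => hf j (by simp [hjs]))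

theorem cg_subset_of {D : Set E} (h0 : (0:E) ∈ D) (hadd : ∀ a ∈ D, ∀ b ∈ D, a + b ∈ D)
    (hsmul : ∀ a ∈ D, ∀ t : ℝ, 0 ≤ t → t • a ∈ D)
    (hgen : ∀ i, v i ∈ D) : cg v ⊆ D := by
  rintro x ⟨c, hc, rfl⟩
  exact sum_mem_of h0 hadd _ _ fun j _ => hsmul _ (hgen j) _ (hc j)

theorem cg_subset_cg [DecidableEq ι] {κ : Type*} [Fintype κ] {w : κ → E}
    (h : ∀ i, v i ∈ cg w) : cg v ⊆ cg w :=
  cg_subset_of zero_mem_cg (fun _ ha _ hb => add_mem_cg ha hb)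
    (fun _ ha _ ht => smul_mem_cg ht ha) h

/-- image of a cone under a linear map -/
theorem image_cg (T : E →ₗ[ℝ] E) : T '' cg v = cg (fun i => T (v i)) := by
  ext z
  constructor
  · rintro ⟨x, ⟨c, hc, rfl⟩, rfl⟩
    exact ⟨c, hc, by simp [map_sum]⟩
  · rintro ⟨c, hc, rfl⟩
    exact ⟨∑ i, c i • v i, ⟨c, hc, rfl⟩, by simp [map_sum]⟩

variable [DecidableEq ι]

/-- In a pointed cone, a finite family summing to zero is identically zero. -/
theorem eq_zero_of_sum_eq_zero {C : Set E} (h0 : (0:E) ∈ C)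
    (hadd : ∀ a ∈ C, ∀ b ∈ C, a + b ∈ C)
    (hpt : ∀ a ∈ C, -a ∈ C → a = 0)
    (g : ι → E) (hg : ∀ j, g j ∈ C) (hsum : ∑ j, g j = 0) (j : ι) : g j = 0 := by
  have hsplit : g j + ∑ i ∈ Finset.univ.erase j, g i = 0 := by
    rw [Finset.add_sum_erase _ _ (Finset.mem_univ j)]; exact hsum
  have hneg : -g j ∈ C := by
    rw [neg_eq_of_add_eq_zero_right hsplit]
    exact sum_mem_of h0 hadd _ _ (fun i _ => hg i)
  exact hpt _ (hg j) hneg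

/-- cone generated by the subfamily indexed by `s` -/
def cgF (v : ι → E) (s : Finset ι) : Set E :=
  {x | ∃ c : ι → ℝ, (∀ i, 0 ≤ c i) ∧ (∀ i ∉ s, c i = 0) ∧ x = ∑ i, c i • v i}

theorem cgF_univ : cgF v Finset.univ = cg v := by
  ext x; constructor
  · rintro ⟨c, hc, -, rfl⟩; exact ⟨c, hc, rfl⟩
  · rintro ⟨c, hc, rfl⟩; exact ⟨c, hc, fun i hi => absurd (Finset.mem_univ i) hi, rfl⟩

theorem zero_mem_cgF {s : Finset ι} : (0:E) ∈ cgF v s :=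
  ⟨0, fun _ => le_rfl, fun _ _ => rfl, by simp⟩

theorem gen_mem_cgF {s : Finset ι} {i : ι} (hi : i ∈ s) : v i ∈ cgF v s := by
  refine ⟨fun j => if j = i then 1 else 0, fun j => by positivity,
    fun j hj => if_neg (fun h => hj (by rw [h]; exact hi)), ?_⟩
  simp [ite_smul]

theorem add_mem_cgF {s : Finset ι} {a b : E} (ha : a ∈ cgF v s) (hb : b ∈ cgF v s) :
    a + b ∈ cgF v s := by
  obtain ⟨c, hc, hcs, rfl⟩ := ha; obtain ⟨c', hc', hcs', rfl⟩ := hb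
  exact ⟨c + c', fun i => add_nonneg (hc i) (hc' i),
    fun i hi => by simp [hcs i hi, hcs' i hi],
    by simp [add_smul, Finset.sum_add_distrib]⟩

theorem smul_mem_cgF {s : Finset ι} {a : E} {t : ℝ} (ht : 0 ≤ t) (ha : a ∈ cgF v s) :
    t • a ∈ cgF v s := by
  obtain ⟨c, hc, hcs, rfl⟩ := ha
  refine ⟨fun i => t * c i, fun i => mul_nonneg ht (hc i),
    fun i hi => by simp [hcs i hi], ?_⟩
  rw [Finset.smul_sum]
  exact Finset.sum_congr rfl fun i _ => (smul_smul t (c i) (v i))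

theorem cgF_subset_of {s : Finset ι} {D : Set E} (h0 : (0:E) ∈ D)
    (hadd : ∀ a ∈ D, ∀ b ∈ D, a + b ∈ D)
    (hsmul : ∀ a ∈ D, ∀ t : ℝ, 0 ≤ t → t • a ∈ D)
    (hgen : ∀ i ∈ s, v i ∈ D) : cgF v s ⊆ D := by
  rintro x ⟨c, hc, hcs, rfl⟩
  have : ∑ i, c i • v i = ∑ i ∈ s, c i • v i := by
    refine (Finset.sum_subset (Finset.subset_univ s) ?_).symm
    intro i _ hi; rw [hcs i hi, zero_smul]
  rw [this]
  exact sum_mem_of h0 hadd _ _ fun j hj => hsmul _ (hgen j hj) _ (hc j)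

theorem cgF_subset_cgF {s t : Finset ι} (h : ∀ i ∈ s, v i ∈ cgF v t) :
    cgF v s ⊆ cgF v t :=
  cgF_subset_of zero_mem_cgF (fun _ ha _ hb => add_mem_cgF ha hb)
    (fun _ ha _ ht => smul_mem_cgF ht ha) h

/-- extraction of an irredundant generating subfamily -/
theorem exists_irredundant (s : Finset ι) :
    ∃ t ⊆ s, cgF v t = cgF v s ∧ ∀ i ∈ t, v i ∉ cgF v (t.erase i) := by
  induction s using Finset.strongInductionOn with
  | _ s ih =>
    by_cases hred : ∃ i ∈ s, v i ∈ cgF v (s.erase i)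
    · obtain ⟨i, his, hi⟩ := hred
      obtain ⟨t, hts, hteq, hirr⟩ := ih (s.erase i) (Finset.erase_ssubset his)
      refine ⟨t, hts.trans (Finset.erase_subset _ _), ?_, hirr⟩
      rw [hteq]
      refine le_antisymm (cgF_subset_cgF fun j hj => ?_)
        (cgF_subset_cgF fun j hj => ?_)
      · exact gen_mem_cgF (Finset.mem_of_mem_erase hj)
      · by_cases hji : j = i
        · exact hji ▸ hi
        · exact gen_mem_cgF (Finset.mem_erase.2 ⟨hji, hj⟩)
    · push_neg at hred
      exact ⟨s, le_rfl, rfl, hred⟩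

theorem extreme_of_irredundant {d : ℕ} {ι : Type*} [Fintype ι] [DecidableEq ι]
    (v : ι → (Fin d → ℝ)) (K : Set (Fin d → ℝ)) (hK : K = cg v)
    (hpt : ∀ a ∈ K, -a ∈ K → a = 0)
    (t : Finset ι) (htK : cgF v t = cg v)
    (hirr : ∀ i ∈ t, v i ∉ cgF v (t.erase i))
    {i : ι} (hit : i ∈ t) (hvi : v i ≠ 0) : IsExtremeRayGen K (v i) := by
  have hKt : K = cgF v t := by rw [hK, htK]
  refine ⟨hvi, by rw [hK]; exact gen_mem_cg i, ?_⟩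
  rintro a ha b hb ⟨c, hc0, hab⟩
  rw [hKt] at ha hb
  obtain ⟨p, hp0, hps, hpa⟩ := ha
  obtain ⟨q, hq0, hqs, hqb⟩ := hb
  have hsum : ∑ j, (p j + q j) • v j = c • v i := by
    rw [← hab, hpa, hqb, ← Finset.sum_add_distrib]
    exact Finset.sum_congr rfl fun j _ => (add_smul _ _ _)
  have hsplit : (p i + q i) • v i + ∑ j ∈ Finset.univ.erase i, (p j + q j) • v j
      = c • v i := by
    rw [Finset.add_sum_erase _ (fun j => (p j + q j) • v j) (Finset.mem_univ i)]
    exact hsum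
  have herase : ∑ j ∈ Finset.univ.erase i, (p j + q j) • v j
      = (c - (p i + q i)) • v i := by
    rw [sub_smul]; linear_combination (norm := module) hsplit
  by_cases hcase : p i + q i < c
  · exfalso
    apply hirr i hit
    have hpos : (0:ℝ) < c - (p i + q i) := by linarith
    refine ⟨fun j => if j = i then 0 else (c - (p i + q i))⁻¹ * (p j + q j), ?_, ?_, ?_⟩
    · intro j
      by_cases hji : j = i
      · simp [hji]
      · simp only [hji, if_false]
        have := add_nonneg (hp0 j) (hq0 j)
        positivity
    · intro j hj
      by_cases hji : j = i
      · simp [hji]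
      · have hjt : j ∉ t := fun hjt => hj (Finset.mem_erase.2 ⟨hji, hjt⟩)
        simp [hji, hps j hjt, hqs j hjt]
    · rw [← Finset.add_sum_erase _ _ (Finset.mem_univ i)]
      simp only [eq_self_iff_true, if_true, zero_smul, zero_add]
      have : ∑ j ∈ Finset.univ.erase i,
          (if j = i then 0 else (c - (p i + q i))⁻¹ * (p j + q j)) • v j
          = (c - (p i + q i))⁻¹ • ∑ j ∈ Finset.univ.erase i, (p j + q j) • v j := by
        rw [Finset.smul_sum]
        refine Finset.sum_congr rfl fun j hj => ?_
        rw [if_neg (Finset.mem_erase.1 hj).1]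
        exact (smul_smul _ _ _).symm
      rw [this, herase, smul_smul, inv_mul_cancel₀ (ne_of_gt hpos), one_smul]
  · push_neg at hcase   -- c ≤ p i + q i
    set g : ι → (Fin d → ℝ) := fun j =>
      if j = i then ((p i + q i) - c) • v i else (p j + q j) • v j with hg
    have hgC : ∀ j, g j ∈ K := by
      intro j
      rw [hK]; by_cases hji : j = i
      · simp only [hg, hji, if_pos rfl]
        exact smul_mem_cg (by linarith) (gen_mem_cg i)
      · simp only [hg, hji, if_false]
        exact smul_mem_cg (add_nonneg (hp0 j) (hq0 j)) (gen_mem_cg j)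
    have hgsum : ∑ j, g j = 0 := by
      rw [← Finset.add_sum_erase _ _ (Finset.mem_univ i)]
      have h1 : ∑ j ∈ Finset.univ.erase i, g j
          = ∑ j ∈ Finset.univ.erase i, (p j + q j) • v j :=
        Finset.sum_congr rfl fun j hj => by
          simp only [hg, if_neg (Finset.mem_erase.1 hj).1]
      rw [h1, herase]
      simp only [hg, if_pos rfl]
      rw [sub_smul, sub_smul]
      abel
    have hz := fun j => eq_zero_of_sum_eq_zero (hK ▸ zero_mem_cg)
      (fun a ha b hb => by rw [hK] at *; exact add_mem_cg ha hb) hpt g hgC hgsum j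
    have hterm : ∀ j, j ≠ i → p j • v j = 0 ∧ q j • v j = 0 := by
      intro j hji
      have := hz j
      simp only [hg, if_neg hji] at this
      rcases smul_eq_zero.1 this with h | h
      · have hp : p j = 0 := le_antisymm (by linarith [hq0 j]) (hp0 j)
        have hq : q j = 0 := le_antisymm (by linarith [hp0 j]) (hq0 j)
        simp [hp, hq]
      · simp [h]
    constructor
    · refine ⟨p i, hp0 i, ?_⟩
      rw [hpa, ← Finset.add_sum_erase _ _ (Finset.mem_univ i)]
      rw [Finset.sum_eq_zero fun j hj => (hterm j (Finset.mem_erase.1 hj).1).1, add_zero]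
    · refine ⟨q i, hq0 i, ?_⟩
      rw [hqb, ← Finset.add_sum_erase _ _ (Finset.mem_univ i)]
      rw [Finset.sum_eq_zero fun j hj => (hterm j (Finset.mem_erase.1 hj).1).2, add_zero]

/-- Minkowski: a pointed f.g. cone is generated by (any covering family of) its
extreme ray generators. -/
theorem minkowski {d n : ℕ} {ι : Type*} [Fintype ι] [DecidableEq ι]
    (v : ι → (Fin d → ℝ)) (x : Fin n → (Fin d → ℝ)) (K : Set (Fin d → ℝ))
    (hK : K = cg v) (hpt : ∀ a ∈ K, -a ∈ K → a = 0)
    (hx : GensDistinctExtremeRays K x) : K = cg x := by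
  obtain ⟨t, -, hteq, hirr⟩ := exists_irredundant (v := v) Finset.univ
  rw [cgF_univ] at hteq
  refine le_antisymm ?_ ?_
  · have : K = cgF v t := by rw [hK, hteq]
    rw [this]
    refine cgF_subset_of zero_mem_cg (fun a ha b hb => add_mem_cg ha hb)
      (fun a ha s hs => smul_mem_cg hs ha) ?_
    intro i hit
    by_cases hvi : v i = 0
    · rw [hvi]; exact zero_mem_cg
    · obtain ⟨j, c, hc, hrep⟩ := hx.2.2 (v i)
        (extreme_of_irredundant v K hK hpt t hteq hirr hit hvi)
      rw [hrep]
      exact smul_mem_cg hc.le (gen_mem_cg j)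
  · refine cg_subset_of ?_ ?_ ?_ ?_
    · rw [hK]; exact zero_mem_cg
    · intro a ha b hb; rw [hK] at *; exact add_mem_cg ha hb
    · intro a ha s hs; rw [hK] at *; exact smul_mem_cg hs ha
    · exact fun j => (hx.1 j).2.1

theorem sum_dotProduct' {d : ℕ} {κ : Type*} (s : Finset κ) (f : κ → (Fin d → ℝ))
    (y : Fin d → ℝ) : (∑ i ∈ s, f i) ⬝ᵥ y = ∑ i ∈ s, f i ⬝ᵥ y := by
  simp only [dotProduct, Finset.sum_apply, Finset.sum_mul]
  rw [Finset.sum_comm]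

/-- dual of a f.g. cone is cut out by the generators -/
theorem eucDual_cg {d : ℕ} {ι : Type*} [Fintype ι] [DecidableEq ι]
    (v : ι → (Fin d → ℝ)) :
    eucDual (cg v) = {y | ∀ i, 0 ≤ v i ⬝ᵥ y} := by
  ext y
  constructor
  · exact fun hy i => hy (v i) (gen_mem_cg i)
  · rintro hy x ⟨c, hc, rfl⟩
    rw [sum_dotProduct']
    refine Finset.sum_nonneg fun i _ => ?_
    rw [smul_dotProduct]
    exact smul_nonneg (hc i) (hy i)

theorem dotProduct_sum' {d : ℕ} {κ : Type*} (s : Finset κ) (y : Fin d → ℝ)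
    (f : κ → (Fin d → ℝ)) : y ⬝ᵥ (∑ i ∈ s, f i) = ∑ i ∈ s, y ⬝ᵥ f i := by
  simp only [dotProduct, Finset.sum_apply, Finset.mul_sum]
  rw [Finset.sum_comm]

/-- Fourier–Motzkin elimination / Weyl's theorem:
an intersection of homogeneous halfspaces is a finitely generated cone. -/
theorem fourier_motzkin {d : ℕ} : ∀ (n : ℕ) (a : Fin n → (Fin d → ℝ)),
    ∃ (ι : Type) (_ : Fintype ι) (_ : DecidableEq ι) (w : ι → (Fin d → ℝ)),
      {y | ∀ i, 0 ≤ a i ⬝ᵥ y} = cg w := by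
  intro n
  induction n with
  | zero =>
    intro a
    refine ⟨Fin d ⊕ Fin d, inferInstance, inferInstance,
      Sum.elim (fun k => Pi.single k 1) (fun k => -Pi.single k 1), ?_⟩
    ext y
    simp only [Set.mem_setOf_eq, IsEmpty.forall_iff, true_iff]
    refine ⟨Sum.elim (fun k => max (y k) 0) (fun k => max (-y k) 0),
      fun t => by cases t <;> simp [le_max_right], ?_⟩
    rw [Fintype.sum_sum_type]
    simp only [Sum.elim_inl, Sum.elim_inr, smul_neg]
    rw [Finset.sum_neg_distrib, ← sub_eq_add_neg, ← Finset.sum_sub_distrib]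
    have : ∀ k : Fin d, max (y k) 0 • (Pi.single k 1 : Fin d → ℝ)
        - max (-y k) 0 • (Pi.single k 1 : Fin d → ℝ)
        = (Pi.single k (y k) : Fin d → ℝ) := by
      intro k
      rw [← sub_smul, max_zero_sub_max_neg_zero_eq_self]
      ext l
      by_cases hl : l = k <;> simp [hl, Pi.single_apply]
    simp_rw [this]
    exact (Finset.univ_sum_single y).symm
  | succ n ih =>
    intro a
    obtain ⟨ι, hF, hD, w, hw⟩ := ih (fun i => a i.succ)
    have hT : ∀ y : Fin d → ℝ, (∀ i : Fin (n+1), 0 ≤ a i ⬝ᵥ y) ↔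
        (0 ≤ a 0 ⬝ᵥ y ∧ ∀ i : Fin n, 0 ≤ a i.succ ⬝ᵥ y) :=
      fun y => ⟨fun h => ⟨h 0, fun i => h i.succ⟩, fun ⟨h0, hs⟩ i => Fin.cases h0 hs i⟩
    set A : ι → ℝ := fun i => a 0 ⬝ᵥ w i with hA
    haveI : DecidablePred (fun i : ι => 0 ≤ A i) := fun i => inferInstance
    refine ⟨{i : ι // 0 ≤ A i} ⊕ ({i : ι // 0 ≤ A i} × {j : ι // ¬ 0 ≤ A j}),
      inferInstance, inferInstance,
      Sum.elim (fun i => w i.1) (fun p => A p.1.1 • w p.2.1 + (-A p.2.1) • w p.1.1), ?_⟩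
    set FP := Finset.univ.filter (fun i : ι => 0 ≤ A i) with hFP
    set FN := Finset.univ.filter (fun i : ι => ¬ 0 ≤ A i) with hFN
    have hPmem : ∀ i : ι, i ∈ FP ↔ 0 ≤ A i := fun i => by simp [hFP]
    have hNmem : ∀ i : ι, i ∈ FN ↔ ¬ 0 ≤ A i := fun i => by simp [hFN]
    have key1 : ∀ f : ι → (Fin d → ℝ), ∑ i : {i : ι // 0 ≤ A i}, f i.1 = ∑ i ∈ FP, f i :=
      fun f => (Finset.sum_subtype FP hPmem f).symm
    have key1N : ∀ f : ι → (Fin d → ℝ), ∑ j : {j : ι // ¬ 0 ≤ A j}, f j.1 = ∑ j ∈ FN, f j :=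
      fun f => (Finset.sum_subtype FN hNmem f).symm
    apply Set.eq_of_subset_of_subset
    · -- feasible set ⊆ cg g
      intro y hy
      have hy0 : 0 ≤ a 0 ⬝ᵥ y := hy 0
      have hyS : y ∈ cg w := by
        rw [← hw]; exact fun i => hy i.succ
      obtain ⟨c, hc, hyc⟩ := hyS
      set α : ℝ := ∑ i ∈ FP, c i * A i with hα
      set β : ℝ := -∑ j ∈ FN, c j * A j with hβ
      have hαnn : 0 ≤ α := Finset.sum_nonneg fun i hi =>
        mul_nonneg (hc i) ((hPmem i).1 hi)
      have hAneg : ∀ j ∈ FN, A j < 0 := fun j hj => not_le.1 ((hNmem j).1 hj)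
      have htermnp : ∀ j ∈ FN, c j * A j ≤ 0 := fun j hj =>
        mul_nonpos_iff.2 (Or.inl ⟨hc j, (hAneg j hj).le⟩)
      have hdot : a 0 ⬝ᵥ y = α - β := by
        rw [hyc, dotProduct_sum']
        have h1 : ∀ i : ι, a 0 ⬝ᵥ (c i • w i) = c i * A i := fun i => by
          rw [dotProduct_smul, smul_eq_mul]
        simp_rw [h1]
        rw [← Finset.sum_filter_add_sum_filter_not Finset.univ (fun i => 0 ≤ A i)
          (fun i => c i * A i), hα, hβ]
        ring
      by_cases hcβ : β ≤ 0
      · have hsum0 : ∑ j ∈ FN, c j * A j = 0 :=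
          le_antisymm (Finset.sum_nonpos htermnp) (by rw [hβ] at hcβ; linarith)
        have hcj : ∀ j ∈ FN, c j = 0 := by
          intro j hj
          have h0 := (Finset.sum_eq_zero_iff_of_nonpos htermnp).1 hsum0 j hj
          rcases mul_eq_zero.1 h0 with h | h
          · exact h
          · exact absurd h (ne_of_lt (hAneg j hj))
        refine ⟨Sum.elim (fun i => c i.1) (fun _ => 0),
          fun t => by cases t <;> simp [hc], ?_⟩
        rw [Fintype.sum_sum_type]
        simp only [Sum.elim_inl, Sum.elim_inr, zero_smul, Finset.sum_const_zero, add_zero]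
        rw [key1 (fun i => c i • w i), hyc]
        refine (Finset.sum_subset (Finset.subset_univ FP) fun j _ hj => ?_).symm
        have : c j = 0 := hcj j ((hNmem j).2 (fun h => hj ((hPmem j).2 h)))
        rw [this, zero_smul]
      · push_neg at hcβ
        have hαβ : β ≤ α := by rw [hdot] at hy0; linarith
        have hαpos : 0 < α := lt_of_lt_of_le hcβ hαβ
        refine ⟨Sum.elim (fun i => c i.1 * (1 - β/α))
          (fun p => c p.1.1 * c p.2.1 / α), ?_, ?_⟩
        · rintro (i | p)
          · simp only [Sum.elim_inl]
            have h1 : β/α ≤ 1 := (div_le_one hαpos).2 hαβ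
            have := hc i.1
            nlinarith
          · simp only [Sum.elim_inr]
            exact div_nonneg (mul_nonneg (hc _) (hc _)) hαpos.le
        · rw [Fintype.sum_sum_type]
          simp only [Sum.elim_inl, Sum.elim_inr]
          rw [Fintype.sum_prod_type]
          rw [key1 (fun i => (c i * (1 - β/α)) • w i)]
          have hconv : ∑ i : {i : ι // 0 ≤ A i}, ∑ j : {j : ι // ¬ 0 ≤ A j},
              (c i.1 * c j.1 / α) • (A i.1 • w j.1 + (-A j.1) • w i.1)
              = ∑ i ∈ FP, ∑ j ∈ FN,
              (c i * c j / α) • (A i • w j + (-A j) • w i) := by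
            rw [key1 (fun i => ∑ j : {j : ι // ¬ 0 ≤ A j},
              (c i * c j.1 / α) • (A i • w j.1 + (-A j.1) • w i))]
            exact Finset.sum_congr rfl fun i _ => key1N
              (fun j => (c i * c j / α) • (A i • w j + (-A j) • w i))
          rw [hconv]
          have hexp : ∀ i j : ι, (c i * c j / α) • (A i • w j + (-A j) • w i)
              = (c i * c j / α * A i) • w j + (c i * c j / α * -A j) • w i := by
            intro i j
            rw [smul_add, smul_smul, smul_smul]
          simp_rw [hexp, Finset.sum_add_distrib]
          rw [Finset.sum_comm (s := FP) (t := FN)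
            (f := fun i j => (c i * c j / α * A i) • w j)]
          have hT1 : ∑ j ∈ FN, ∑ i ∈ FP, (c i * c j / α * A i) • w j
              = ∑ j ∈ FN, c j • w j := by
            refine Finset.sum_congr rfl fun j hj => ?_
            rw [← Finset.sum_smul]
            congr 1
            have h2 : ∀ i ∈ FP, c i * c j / α * A i = c i * A i * (c j / α) :=
              fun i _ => by ring
            rw [Finset.sum_congr rfl h2, ← Finset.sum_mul, ← hα, mul_comm,
              div_mul_cancel₀ _ (ne_of_gt hαpos)]
          have hT2 : ∑ i ∈ FP, ∑ j ∈ FN, (c i * c j / α * -A j) • w i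
              = ∑ i ∈ FP, (c i * (β/α)) • w i := by
            refine Finset.sum_congr rfl fun i hi => ?_
            rw [← Finset.sum_smul]
            congr 1
            have h2 : ∀ j ∈ FN, c i * c j / α * -A j = (c j * -A j) * (c i / α) :=
              fun j _ => by ring
            rw [Finset.sum_congr rfl h2, ← Finset.sum_mul]
            have h3 : ∑ j ∈ FN, c j * -A j = β := by
              rw [hβ, ← Finset.sum_neg_distrib]
              exact Finset.sum_congr rfl fun j _ => by ring
            rw [h3]; ring
          rw [hT1, hT2]
          have hcomb : ∑ i ∈ FP, (c i * (1 - β/α)) • w i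
              + ∑ i ∈ FP, (c i * (β/α)) • w i = ∑ i ∈ FP, c i • w i := by
            rw [← Finset.sum_add_distrib]
            refine Finset.sum_congr rfl fun i _ => ?_
            rw [← add_smul]
            congr 1
            ring
          rw [hyc, ← Finset.sum_filter_add_sum_filter_not Finset.univ
            (fun i => 0 ≤ A i) (fun i => c i • w i), ← hcomb]
          abel
    · -- cg g ⊆ feasible set
      refine cg_subset_of ?_ ?_ ?_ ?_
      · intro i; simp
      · intro p hp q hq i
        rw [dotProduct_add]
        exact add_nonneg (hp i) (hq i)
      · intro p hp t ht i
        rw [dotProduct_smul, smul_eq_mul]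
        exact mul_nonneg ht (hp i)
      · rintro (i | p) <;> rw [Set.mem_setOf_eq, hT]
        · refine ⟨i.2, ?_⟩
          have h1 : w i.1 ∈ cg w := gen_mem_cg i.1
          rw [← hw] at h1
          exact fun k => h1 k
        · constructor
          · have hz : a 0 ⬝ᵥ (A p.1.1 • w p.2.1 + (-A p.2.1) • w p.1.1) = 0 := by
              rw [dotProduct_add, dotProduct_smul,
                dotProduct_smul, smul_eq_mul, smul_eq_mul]
              simp only [hA]
              ring
            rw [Sum.elim_inr, hz]
          · have h1 : w p.1.1 ∈ cg w := gen_mem_cg p.1.1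
            have h2 : w p.2.1 ∈ cg w := gen_mem_cg p.2.1
            have hmem : A p.1.1 • w p.2.1 + (-A p.2.1) • w p.1.1 ∈ cg w :=
              add_mem_cg (smul_mem_cg p.1.2 h2)
                (smul_mem_cg (by have := not_le.1 p.2.2; linarith) h1)
            rw [← hw] at hmem
            exact fun k => hmem k
theorem dual_pointed {d : ℕ} (K : Set (Fin d → ℝ))
    (hfull : Submodule.span ℝ K = ⊤) :
    ∀ z ∈ eucDual K, -z ∈ eucDual K → z = 0 := by
  intro z hz hnz
  have horth : ∀ a ∈ K, a ⬝ᵥ z = 0 := by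
    intro a ha
    have h1 := hz a ha
    have h2 := hnz a ha
    rw [dotProduct_neg] at h2
    linarith
  have hz_top : z ∈ Submodule.span ℝ K := by rw [hfull]; exact Submodule.mem_top
  have hzz : z ⬝ᵥ z = 0 := by
    refine Submodule.span_induction (p := fun a _ => a ⬝ᵥ z = 0)
      (fun a ha => horth a ha) (by simp) ?_ ?_ hz_top
    · intro p q hp hq h1 h2
      rw [add_dotProduct, h1, h2, add_zero]
    · intro t p hp h1
      rw [smul_dotProduct, h1, smul_zero]
  exact dotProduct_self_eq_zero.1 hzz

theorem span_dual_top {d : ℕ} {ι : Type*} [Fintype ι] [DecidableEq ι]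
    (x : ι → (Fin d → ℝ)) (K : Set (Fin d → ℝ)) (hK : K = cg x)
    (hpt : ∀ a ∈ K, -a ∈ K → a = 0) (hx0 : ∀ i, x i ≠ 0) :
    Submodule.span ℝ (eucDual K) = ⊤ := by
  have hKz : (0 : Fin d → ℝ) ∈ K := by rw [hK]; exact zero_mem_cg
  have hKadd : ∀ a ∈ K, ∀ b ∈ K, a + b ∈ K := by
    intro a ha b hb; rw [hK] at *; exact add_mem_cg ha hb
  have hKsmul : ∀ a ∈ K, ∀ t : ℝ, 0 ≤ t → t • a ∈ K := by
    intro a ha t ht; rw [hK] at *; exact smul_mem_cg ht ha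
  have hKgen : ∀ i, x i ∈ K := fun i => by rw [hK]; exact gen_mem_cg i
  -- 0 is not in the convex hull of the generators
  have h0C : (0 : Fin d → ℝ) ∉ convexHull ℝ (Set.range x) := by
    classical
    intro h0
    rw [convexHull_eq] at h0
    obtain ⟨κ, t, wgt, z, hw0, hw1, hzs, hcm⟩ := h0
    have hcm' : ∑ i ∈ t, wgt i • z i = 0 := by
      rw [Finset.centerMass, hw1] at hcm
      simpa using hcm
    obtain ⟨i0, hi0t, hi0⟩ : ∃ i ∈ t, 0 < wgt i := by
      by_contra hcon
      push_neg at hcon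
      have h1 : (1:ℝ) = 0 := by
        rw [← hw1]
        exact Finset.sum_eq_zero fun i hi => le_antisymm (hcon i hi) (hw0 i hi)
      exact one_ne_zero h1
    have hsplit : wgt i0 • z i0 + ∑ i ∈ t.erase i0, wgt i • z i = 0 := by
      rw [Finset.add_sum_erase t (fun i => wgt i • z i) hi0t]; exact hcm'
    have hmemK : ∀ i ∈ t, wgt i • z i ∈ K := by
      intro i hi
      obtain ⟨j, hj⟩ := hzs i hi
      exact hj ▸ hKsmul _ (hKgen j) _ (hw0 i hi)
    have hneg : -(wgt i0 • z i0) ∈ K := by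
      rw [neg_eq_of_add_eq_zero_right hsplit]
      exact sum_mem_of hKz hKadd _ _ fun i hi => hmemK i (Finset.mem_of_mem_erase hi)
    have hzero := hpt _ (hmemK i0 hi0t) hneg
    rcases smul_eq_zero.1 hzero with h | h
    · exact absurd h (ne_of_gt hi0)
    · obtain ⟨j', hj'⟩ := hzs i0 hi0t
      exact hx0 j' (by rw [hj', h])
  -- separation
  obtain ⟨f, u, hu0, hsep⟩ := geometric_hahn_banach_point_closed
    (convex_convexHull ℝ _) ((Set.finite_range x).isCompact_convexHull (𝕜 := ℝ)).isClosed h0C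
  rw [map_zero] at hu0
  set ystar : Fin d → ℝ := fun k => f (Pi.single k 1) with hys
  have hrep : ∀ z : Fin d → ℝ, f z = z ⬝ᵥ ystar := by
    intro z
    have hzdecomp : z = ∑ k, z k • (Pi.single k 1 : Fin d → ℝ) := by
      rw [← Finset.univ_sum_single z]
      refine Finset.sum_congr rfl fun k _ => ?_
      ext l; by_cases hl : l = k <;> simp [Pi.single_apply, hl]
    conv_lhs => rw [hzdecomp]
    rw [map_sum]
    simp_rw [_root_.map_smul]
    rw [dotProduct]
    exact Finset.sum_congr rfl fun k _ => by rw [smul_eq_mul]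
  have hxpos : ∀ i, u < x i ⬝ᵥ ystar := by
    intro i
    have := hsep (x i) (subset_convexHull ℝ _ (Set.mem_range_self i))
    rwa [hrep] at this
  have hdual : eucDual K = {y | ∀ i, 0 ≤ x i ⬝ᵥ y} := by rw [hK, eucDual_cg]
  have hystar_mem : ystar ∈ eucDual K := by
    rw [hdual]; exact fun i => by linarith [hxpos i]
  rw [eq_top_iff]
  rintro z -
  set Mz : ℝ := ∑ i, |x i ⬝ᵥ z| with hM
  have hMnn : 0 ≤ Mz := Finset.sum_nonneg fun i _ => abs_nonneg _
  set ε : ℝ := u / (Mz + 1) with hε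
  have hεpos : 0 < ε := div_pos hu0 (by linarith)
  have hεM : ε * (Mz + 1) = u := div_mul_cancel₀ _ (by linarith)
  have hmem : ystar + ε • z ∈ eucDual K := by
    rw [hdual]
    intro i
    rw [dotProduct_add, dotProduct_smul, smul_eq_mul]
    have h1 : |x i ⬝ᵥ z| ≤ Mz :=
      Finset.single_le_sum (fun j _ => abs_nonneg (x j ⬝ᵥ z)) (Finset.mem_univ i)
    have h2 := hxpos i
    have h3 : -Mz ≤ x i ⬝ᵥ z := by
      have := neg_abs_le (x i ⬝ᵥ z); linarith
    nlinarith [mul_le_mul_of_nonneg_left h3 hεpos.le]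
  have hzrep : z = ε⁻¹ • ((ystar + ε • z) - ystar) := by
    rw [add_sub_cancel_left, smul_smul, inv_mul_cancel₀ (ne_of_gt hεpos), one_smul]
  rw [hzrep]
  exact Submodule.smul_mem _ _ (Submodule.sub_mem _
    (Submodule.subset_span hmem) (Submodule.subset_span hystar_mem))

theorem exists_left_inv {d n : ℕ} (X : Matrix (Fin n) (Fin d) ℝ)
    (h : ∀ z : Fin d → ℝ, (∀ i, X i ⬝ᵥ z = 0) → z = 0) :
    ∃ L : Matrix (Fin d) (Fin n) ℝ, L * X = 1 := by
  have hker : LinearMap.ker (Matrix.toLin' X) = ⊥ := by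
    rw [LinearMap.ker_eq_bot']
    intro z hz
    refine h z fun i => ?_
    have := congr_fun hz i
    simpa [Matrix.toLin'_apply, Matrix.mulVec, dotProduct] using this
  obtain ⟨g, hg⟩ := LinearMap.exists_leftInverse_of_injective _ hker
  refine ⟨LinearMap.toMatrix' g, ?_⟩
  have := congr_arg LinearMap.toMatrix' hg
  rwa [LinearMap.toMatrix'_comp, LinearMap.toMatrix'_toLin', LinearMap.toMatrix'_id] at this

theorem exists_right_inv {d m : ℕ} (Y : Matrix (Fin d) (Fin m) ℝ)
    (h : Submodule.span ℝ (Set.range Yᵀ) = ⊤) :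
    ∃ W : Matrix (Fin m) (Fin d) ℝ, Y * W = 1 := by
  have hsurj : LinearMap.range (Matrix.toLin' Y) = ⊤ := by
    rw [Matrix.toLin'_apply', Matrix.range_mulVecLin]; exact h
  obtain ⟨g, hg⟩ := LinearMap.exists_rightInverse_of_surjective _ hsurj
  refine ⟨LinearMap.toMatrix' g, ?_⟩
  have := congr_arg LinearMap.toMatrix' hg
  rwa [LinearMap.toMatrix'_comp, LinearMap.toMatrix'_toLin', LinearMap.toMatrix'_id] at this

theorem isUnit_of_mulVec_inj {d : ℕ} (S : Matrix (Fin d) (Fin d) ℝ)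
    (h : ∀ z : Fin d → ℝ, S.mulVec z = 0 → z = 0) : IsUnit S := by
  rw [← Matrix.mulVec_injective_iff_isUnit]
  intro u v huv
  have : S.mulVec (u - v) = 0 := by
    rw [Matrix.mulVec_sub, huv, sub_self]
  have h2 := h _ this
  exact sub_eq_zero.1 h2

theorem cg_subset_span {ι : Type*} [Fintype ι] {v : ι → E} :
    cg v ⊆ (Submodule.span ℝ (Set.range v) : Set E) := by
  rintro x ⟨c, hc, rfl⟩
  exact Submodule.sum_mem _ fun i _ =>
    Submodule.smul_mem _ _ (Submodule.subset_span ⟨i, rfl⟩)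

end SlackAux

/-- If `M = U V` is a factorization of a slack matrix of a pointed
full-dimensional polyhedral cone `K ⊆ ℝ^d` with `U ∈ ℝ^{n×d}`, `V ∈ ℝ^{d×m}`, then `K`
is linearly isomorphic to the cone generated by the rows of `U`, and the Euclidean dual
of that cone equals the cone generated by the columns of `V`. -/
theorem slack_factorization_identifies_cone_and_dual
    {d n m : ℕ} (K : Set (Fin d → ℝ))
    (hpoly : IsPolyhedralCone K) (hpointed : K ∩ (-K) = {0})
    (hfull : Submodule.span ℝ K = ⊤)
    (M : Matrix (Fin n) (Fin m) ℝ) (hslack : IsSlackMatrix M K)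
    (U : Matrix (Fin n) (Fin d) ℝ) (V : Matrix (Fin d) (Fin m) ℝ)
    (hfact : M = U * V) :
    (∃ S : Matrix (Fin d) (Fin d) ℝ, IsUnit S.det ∧
        (fun v => S.mulVec v) '' K = coneGenBy (fun i => U i)) ∧
      eucDual (coneGenBy (fun i => U i)) = coneGenBy (fun j => fun i => V i j) := by
  classical
  obtain ⟨N, v, hKv⟩ := hpoly
  obtain ⟨x, yf, hx, hy, hMslack⟩ := hslack
  have hKcg : K = SlackAux.cg v := hKv
  have hpt : ∀ a ∈ K, -a ∈ K → a = 0 := by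
    intro a ha hna
    have hmem : a ∈ K ∩ (-K) := ⟨ha, Set.mem_neg.2 hna⟩
    rw [hpointed] at hmem
    exact hmem
  -- (A) K is generated by the extreme-ray generators x
  have hKx : K = SlackAux.cg x := SlackAux.minkowski v x K hKcg hpt hx
  -- dual characterization and Weyl
  have hdual_char : eucDual K = {y | ∀ i, 0 ≤ x i ⬝ᵥ y} := by
    rw [hKx, SlackAux.eucDual_cg]
  obtain ⟨ι, hF, hD, w, hwc⟩ := SlackAux.fourier_motzkin n x
  letI := hF; letI := hD
  have hdual_cg : eucDual K = SlackAux.cg w := by rw [hdual_char, hwc]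
  have hdual_pt : ∀ a ∈ eucDual K, -a ∈ eucDual K → a = 0 :=
    SlackAux.dual_pointed K hfull
  -- (B) eucDual K is generated by the y's
  have hdual_y : eucDual K = SlackAux.cg yf :=
    SlackAux.minkowski w yf (eucDual K) hdual_cg hdual_pt hy
  -- spans
  have hspan_x : Submodule.span ℝ (Set.range x) = ⊤ := by
    have h1 : Submodule.span ℝ K ≤ Submodule.span ℝ (Set.range x) :=
      Submodule.span_le.2 (by rw [hKx]; exact SlackAux.cg_subset_span)
    rw [hfull] at h1
    exact top_le_iff.1 h1
  have hspan_dual : Submodule.span ℝ (eucDual K) = ⊤ :=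
    SlackAux.span_dual_top x K hKx hpt (fun i => (hx.1 i).1)
  have hspan_y : Submodule.span ℝ (Set.range yf) = ⊤ := by
    have h1 : Submodule.span ℝ (eucDual K) ≤ Submodule.span ℝ (Set.range yf) :=
      Submodule.span_le.2 (by rw [hdual_y]; exact SlackAux.cg_subset_span)
    rw [hspan_dual] at h1
    exact top_le_iff.1 h1
  -- matrices
  set X : Matrix (Fin n) (Fin d) ℝ := Matrix.of x with hXdef
  set Ymat : Matrix (Fin d) (Fin m) ℝ := (Matrix.of yf)ᵀ with hYdef
  have hM : M = X * Ymat := by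
    ext i j
    rw [hMslack i j]
    simp [Matrix.mul_apply, dotProduct, hXdef, hYdef]
  have hXinj : ∀ z : Fin d → ℝ, (∀ i, X i ⬝ᵥ z = 0) → z = 0 := by
    intro z hz
    have hz_top : z ∈ Submodule.span ℝ (Set.range x) := by
      rw [hspan_x]; exact Submodule.mem_top
    have hzz : z ⬝ᵥ z = 0 := by
      refine Submodule.span_induction (p := fun a _ => a ⬝ᵥ z = 0)
        ?_ (by simp) ?_ ?_ hz_top
      · rintro a ⟨i, rfl⟩; exact hz i
      · intro p q hp hq h1 h2
        rw [add_dotProduct, h1, h2, add_zero]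
      · intro t p hp h1
        rw [smul_dotProduct, h1, smul_zero]
    exact dotProduct_self_eq_zero.1 hzz
  obtain ⟨L, hL⟩ := SlackAux.exists_left_inv X hXinj
  obtain ⟨W, hW⟩ := SlackAux.exists_right_inv Ymat
    (by rw [hYdef, Matrix.transpose_transpose]; exact hspan_y)
  set S : Matrix (Fin d) (Fin d) ℝ := V * W with hS
  have hXUS : X = U * S := by
    calc X = X * (Ymat * W) := by rw [hW, Matrix.mul_one]
    _ = (X * Ymat) * W := by rw [Matrix.mul_assoc]
    _ = M * W := by rw [hM]
    _ = (U * V) * W := by rw [hfact]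
    _ = U * S := by rw [Matrix.mul_assoc, hS]
  have hSunit : IsUnit S := by
    refine SlackAux.isUnit_of_mulVec_inj S (fun z hz => hXinj z ?_)
    intro i
    have h1 : X.mulVec z = 0 := by
      rw [hXUS, ← Matrix.mulVec_mulVec, hz, Matrix.mulVec_zero]
    have := congr_fun h1 i
    simpa [Matrix.mulVec] using this
  have hSdet : IsUnit S.det := (Matrix.isUnit_iff_isUnit_det S).1 hSunit
  have hSS : S * S⁻¹ = 1 := Matrix.mul_nonsing_inv S hSdet
  have hSS' : S⁻¹ * S = 1 := Matrix.nonsing_inv_mul S hSdet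
  have hU : U = X * S⁻¹ := by
    rw [hXUS, Matrix.mul_assoc, hSS, Matrix.mul_one]
  have hV : V = S * Ymat := by
    have h1 : X * S⁻¹ * V = X * Ymat := by
      rw [← hU, ← hfact, hM]
    have h2 : S⁻¹ * V = Ymat := by
      have h3 : L * (X * S⁻¹ * V) = L * (X * Ymat) := by rw [h1]
      calc S⁻¹ * V = (L * X) * (S⁻¹ * V) := by rw [hL, Matrix.one_mul]
      _ = L * (X * S⁻¹ * V) := by simp only [Matrix.mul_assoc]
      _ = L * (X * Ymat) := h3
      _ = (L * X) * Ymat := by rw [Matrix.mul_assoc]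
      _ = Ymat := by rw [hL, Matrix.one_mul]
    rw [← h2, ← Matrix.mul_assoc, hSS, Matrix.one_mul]
  set A : Matrix (Fin d) (Fin d) ℝ := (S⁻¹)ᵀ with hAdef
  have hAdet : IsUnit A.det := by
    rw [hAdef, Matrix.det_transpose, Matrix.det_nonsing_inv]
    exact isUnit_iff_ne_zero.2 (by
      rw [Ring.inverse_eq_inv']
      exact inv_ne_zero hSdet.ne_zero)
  have hrowU : (fun i => U i) = fun i => A.mulVec (x i) := by
    funext i
    funext k
    rw [hU]
    simp [Matrix.mul_apply, Matrix.mulVec, dotProduct, hAdef,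
      Matrix.transpose_apply, hXdef, mul_comm]
  have hATr : Aᵀ = S⁻¹ := by rw [hAdef, Matrix.transpose_transpose]
  have hUdot : ∀ (i : Fin n) (y : Fin d → ℝ), U i ⬝ᵥ y = x i ⬝ᵥ (S⁻¹).mulVec y := by
    intro i y
    have h1 : U i = A.mulVec (x i) := congr_fun hrowU i
    rw [h1, ← hATr]
    rw [dotProduct_comm, Matrix.dotProduct_mulVec, dotProduct_comm,
      Matrix.mulVec_transpose]
  have hcolV : (fun j => fun k => V k j) = fun j => S.mulVec (yf j) := by
    funext j
    funext k
    rw [hV]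
    simp [Matrix.mul_apply, Matrix.mulVec, dotProduct, hYdef]
  have himage : ∀ (T : Matrix (Fin d) (Fin d) ℝ) (k : ℕ) (g : Fin k → (Fin d → ℝ)),
      (fun z => T.mulVec z) '' SlackAux.cg g = SlackAux.cg (fun i => T.mulVec (g i)) := by
    intro T k g
    have := SlackAux.image_cg (v := g) (Matrix.mulVecLin T)
    exact this
  constructor
  · -- first part
    refine ⟨A, hAdet, ?_⟩
    have hcone : coneGenBy (fun i => U i) = SlackAux.cg (fun i => U i) := rfl
    rw [hcone, hrowU, hKx, himage A n x]
  · -- second part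
    have hcone : coneGenBy (fun i => U i) = SlackAux.cg (fun i => U i) := rfl
    have hconeV : coneGenBy (fun j => fun i => V i j)
        = SlackAux.cg (fun j => fun i => V i j) := rfl
    rw [hcone, hconeV, SlackAux.eucDual_cg]
    ext y
    constructor
    · intro hy
      have hmem : (S⁻¹).mulVec y ∈ SlackAux.cg yf := by
        rw [← hdual_y, hdual_char]
        intro i
        have := hy i
        rwa [hUdot] at this
      have hrep : y = S.mulVec ((S⁻¹).mulVec y) := by
        rw [Matrix.mulVec_mulVec, hSS, Matrix.one_mulVec]
      rw [hcolV]
      rw [← himage S m yf]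
      exact ⟨(S⁻¹).mulVec y, hmem, hrep.symm⟩
    · intro hy
      rw [hcolV, ← himage S m yf] at hy
      obtain ⟨z, hz, rfl⟩ := hy
      intro i
      rw [hUdot, Matrix.mulVec_mulVec, hSS', Matrix.one_mulVec]
      rw [← hdual_y, hdual_char] at hz
      exact hz i
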